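/- Let p: [a,b] → (0,1) be smooth with nowhere-vanishing derivative, define r(θ) = exp(∫_a^θ ṗ(s)(1−2p(s))/(2p(s)(1−p(s))) ds), and choose ε with 0 < ε² < min_θ p(θ)(1−p(θ))/r(θ)². Then the 2×2 matrix family ρ_θ = [[p(θ), ε r(θ)],[ε r(θ), 1−p(θ)]] consists of positive-definite density matrices, and the diagonal matrix L_θ = diag(ṗ(θ)/p(θ), −ṗ(θ)/(1−p(θ))) satisfies the SLD equation ρ̇_θ = (1/2)(ρ_θ L_θ + L_θ ρ_θ). -/

import Mathlib

open scoped Matrix ComplexOrder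

/-- `r(θ) = exp ∫_a^θ ṗ(s)(1−2p(s))/(2p(s)(1−p(s))) ds`, with `p'` the
derivative of `p`. -/
noncomputable def rFun (a : ℝ) (p p' : ℝ → ℝ) (θ : ℝ) : ℝ :=
  Real.exp (∫ s in a..θ, p' s * (1 - 2 * p s) / (2 * p s * (1 - p s)))

/-- The qubit family `ρ_θ = [[p(θ), ε r(θ)],[ε r(θ), 1−p(θ)]]`. -/
noncomputable def rhoFam (a : ℝ) (p p' : ℝ → ℝ) (ε : ℝ) (θ : ℝ) :
    Matrix (Fin 2) (Fin 2) ℂ :=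
  !![(p θ : ℂ), ((ε * rFun a p p' θ : ℝ) : ℂ);
     ((ε * rFun a p p' θ : ℝ) : ℂ), ((1 - p θ : ℝ) : ℂ)]

/-- The diagonal operator `L_θ = diag(ṗ(θ)/p(θ), −ṗ(θ)/(1−p(θ)))`. -/
noncomputable def LFam (p p' : ℝ → ℝ) (θ : ℝ) : Matrix (Fin 2) (Fin 2) ℂ :=
  Matrix.diagonal ![((p' θ / p θ : ℝ) : ℂ), ((-(p' θ / (1 - p θ)) : ℝ) : ℂ)]

lemma quad_pos (P c u v s t : ℝ) (hp0 : 0 < P) (hp1 : P < 1) (hc : c ^ 2 < P * (1 - P))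
    (hx : 0 < u ^ 2 + v ^ 2 + s ^ 2 + t ^ 2) :
    0 < P * (u ^ 2 + v ^ 2) + (1 - P) * (s ^ 2 + t ^ 2) + c * (2 * (u * s + v * t)) := by
  set Q := 1 - P with hQ
  have hq0 : 0 < Q := by simp [hQ]; linarith
  set A := u ^ 2 + v ^ 2 with hA
  set B := s ^ 2 + t ^ 2 with hB
  set D := u * s + v * t with hD
  have hA0 : 0 ≤ A := by positivity
  have hB0 : 0 ≤ B := by positivity
  have hDAB : D ^ 2 ≤ A * B := by
    simp only [hA, hB, hD]; nlinarith [sq_nonneg (u * t - v * s)]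
  have hABpos : 0 < A + B := by simp only [hA, hB]; linarith
  have hS : 0 < P * A + Q * B := by
    rcases lt_or_ge 0 A with h | h
    · nlinarith [mul_nonneg hq0.le hB0, mul_pos hp0 h]
    · have hA' : A = 0 := le_antisymm h hA0
      have hB' : 0 < B := by linarith
      nlinarith [mul_pos hq0 hB', mul_nonneg hp0.le hA0]
  by_contra hle
  push_neg at hle
  have h2 : -(2 * c * D) ≥ P * A + Q * B := by linarith
  have h3 : (P * A + Q * B) ^ 2 ≤ 4 * (c ^ 2 * D ^ 2) := by nlinarith
  have h4 : 4 * (P * Q) * (A * B) ≤ (P * A + Q * B) ^ 2 := by nlinarith [sq_nonneg (P * A - Q * B)]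
  rcases eq_or_ne D 0 with hD0 | hD0
  · rw [hD0] at hle; linarith
  · have hD2 : 0 < D ^ 2 := by positivity
    have h5 : 4 * (c ^ 2 * D ^ 2) < 4 * ((P * Q) * D ^ 2) := by
      have := mul_lt_mul_of_pos_right hc hD2
      linarith
    have h6 : 4 * ((P * Q) * D ^ 2) ≤ 4 * ((P * Q) * (A * B)) := by
      have := mul_le_mul_of_nonneg_left hDAB (le_of_lt (mul_pos hp0 hq0))
      linarith
    have h7 : 4 * ((P * Q) * (A * B)) ≤ (P * A + Q * B) ^ 2 := by linarith
    linarith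

lemma hasDerivWithinAt_ofReal_comp {f : ℝ → ℝ} {u x : ℝ} {s : Set ℝ}
    (hf : HasDerivWithinAt f u s x) :
    HasDerivWithinAt (fun y : ℝ => ((f y : ℝ) : ℂ)) (u : ℂ) s x := by
  exact hf.ofReal_comp

set_option maxHeartbeats 2000000 in
/-- for a smooth `p : [a,b] → (0,1)` with nowhere-vanishing
derivative `p'`, `r` as above, and `ε` with
`0 < ε² < min_θ p(θ)(1−p(θ))/r(θ)²`, the family `ρ_θ` consists of
positive-definite density matrices and the diagonal matrix `L_θ` satisfies the
SLD equation `ρ̇_θ = (1/2)(ρ_θ L_θ + L_θ ρ_θ)` (entrywise derivative within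
`[a,b]`). -/
theorem stmt13 (a b : ℝ) (hab : a < b) (p p' : ℝ → ℝ) (ε : ℝ)
    (hp : ∀ θ ∈ Set.Icc a b, 0 < p θ ∧ p θ < 1)
    (hderiv : ∀ θ ∈ Set.Icc a b, HasDerivWithinAt p (p' θ) (Set.Icc a b) θ)
    (hp'cont : ContinuousOn p' (Set.Icc a b))
    (hp'ne : ∀ θ ∈ Set.Icc a b, p' θ ≠ 0)
    (hε : 0 < ε ^ 2)
    (hεlt : ∀ θ ∈ Set.Icc a b, ε ^ 2 < p θ * (1 - p θ) / (rFun a p p' θ) ^ 2) :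
    ∀ θ ∈ Set.Icc a b,
      (rhoFam a p p' ε θ).PosDef ∧ (rhoFam a p p' ε θ).trace = 1 ∧
      ∀ i j, HasDerivWithinAt (fun t => rhoFam a p p' ε t i j)
        (((1 / 2 : ℂ) • (rhoFam a p p' ε θ * LFam p p' θ + LFam p p' θ * rhoFam a p p' ε θ)) i j)
        (Set.Icc a b) θ := by
  intro θ hθ
  obtain ⟨hp0, hp1⟩ := hp θ hθ
  have hq0 : 0 < 1 - p θ := by linarith
  set g : ℝ → ℝ := fun s => p' s * (1 - 2 * p s) / (2 * p s * (1 - p s)) with hgdef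
  have hpc : ContinuousOn p (Set.Icc a b) := fun t ht => (hderiv t ht).continuousWithinAt
  have hgc : ContinuousOn g (Set.Icc a b) := by
    apply ContinuousOn.div
    · exact hp'cont.mul (continuousOn_const.sub (continuousOn_const.mul hpc))
    · exact (continuousOn_const.mul hpc).mul (continuousOn_const.sub hpc)
    · intro t ht
      obtain ⟨h1, h2⟩ := hp t ht
      have : 0 < 2 * p t * (1 - p t) := by nlinarith
      exact ne_of_gt this
  have hrpos : 0 < rFun a p p' θ := Real.exp_pos _
  -- derivative of rFun within Icc
  have hr : HasDerivWithinAt (rFun a p p') (g θ * rFun a p p' θ) (Set.Icc a b) θ := by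
    haveI : Fact (θ ∈ Set.Icc a b) := ⟨hθ⟩
    have hint : IntervalIntegrable g MeasureTheory.volume a θ := by
      apply ContinuousOn.intervalIntegrable
      apply hgc.mono
      rw [Set.uIcc_of_le hθ.1]
      exact Set.Icc_subset_Icc le_rfl hθ.2
    have hms : StronglyMeasurableAtFilter g (nhdsWithin θ (Set.Icc a b)) :=
      hgc.stronglyMeasurableAtFilter_nhdsWithin measurableSet_Icc θ
    have hI : HasDerivWithinAt (fun u => ∫ s in a..u, g s) (g θ) (Set.Icc a b) θ :=
      intervalIntegral.integral_hasDerivWithinAt_right hint hms (hgc θ hθ)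
    have h2 := hI.exp
    have : rFun a p p' θ * g θ = g θ * rFun a p p' θ := mul_comm _ _
    rw [show g θ * rFun a p p' θ = Real.exp (∫ s in a..θ, g s) * g θ from (mul_comm _ _)]
    exact h2
  -- the RHS matrix computed explicitly
  have hpne : (p θ : ℂ) ≠ 0 := by exact_mod_cast hp0.ne'
  have hqne : ((1 - p θ : ℝ) : ℂ) ≠ 0 := by exact_mod_cast hq0.ne'
  have hrhs : ((1 / 2 : ℂ) • (rhoFam a p p' ε θ * LFam p p' θ + LFam p p' θ * rhoFam a p p' ε θ))
      = !![(p' θ : ℂ), ((ε * (g θ * rFun a p p' θ) : ℝ) : ℂ);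
           ((ε * (g θ * rFun a p p' θ) : ℝ) : ℂ), ((-(p' θ) : ℝ) : ℂ)] := by
    have hL : LFam p p' θ = !![((p' θ / p θ : ℝ) : ℂ), 0; 0, ((-(p' θ / (1 - p θ)) : ℝ) : ℂ)] := by
      ext i j
      fin_cases i <;> fin_cases j <;> simp [LFam]
    rw [hL]
    show (1 / 2 : ℂ) • (!![_,_;_,_] * !![_,_;_,_] + !![_,_;_,_] * !![_,_;_,_]) = _
    rw [Matrix.mul_fin_two, Matrix.mul_fin_two]
    ext i j
    fin_cases i <;> fin_cases j <;>
      simp [hgdef] <;> norm_cast <;> field_simp [hp0.ne', hq0.ne'] <;> push_cast <;> norm_cast <;> field_simp [hp0.ne', hq0.ne'] <;> push_cast <;> ring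
  refine ⟨?_, ?_, ?_⟩
  · -- PosDef
    rw [Matrix.posDef_iff_dotProduct_mulVec]
    constructor
    · ext i j
      fin_cases i <;> fin_cases j <;>
        simp [rhoFam, Matrix.conjTranspose_apply, Complex.conj_ofReal]
    · intro x hx
      have hc2 : (ε * rFun a p p' θ) ^ 2 < p θ * (1 - p θ) := by
        have := hεlt θ hθ
        have hr2 : 0 < rFun a p p' θ ^ 2 := by positivity
        rw [lt_div_iff₀ hr2] at this
        nlinarith
      have hx01 : x 0 ≠ 0 ∨ x 1 ≠ 0 := by
        by_contra h
        push_neg at h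
        apply hx
        funext i
        fin_cases i
        · exact h.1
        · exact h.2
      have hval : dotProduct (star x) (rhoFam a p p' ε θ *ᵥ x)
          = ((p θ : ℂ)) * (starRingEnd ℂ (x 0) * x 0)
            + ((1 - p θ : ℝ) : ℂ) * (starRingEnd ℂ (x 1) * x 1)
            + ((ε * rFun a p p' θ : ℝ) : ℂ) * (starRingEnd ℂ (x 0) * x 1 + starRingEnd ℂ (x 1) * x 0) := by
        simp [rhoFam, dotProduct, Matrix.mulVec, Fin.sum_univ_two]
        push_cast
        ring
      rw [hval]
      set u := (x 0).re; set v := (x 0).im; set s := (x 1).re; set t := (x 1).im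
      have hx' : 0 < u ^ 2 + v ^ 2 + s ^ 2 + t ^ 2 := by
        rcases hx01 with h | h
        · have h2 := Complex.normSq_pos.mpr h
          rw [Complex.normSq_apply] at h2
          nlinarith [sq_nonneg s, sq_nonneg t]
        · have h2 := Complex.normSq_pos.mpr h
          rw [Complex.normSq_apply] at h2
          nlinarith [sq_nonneg u, sq_nonneg v]
      rw [Complex.lt_def]
      constructor
      · have key := quad_pos (p θ) (ε * rFun a p p' θ) u v s t hp0 hp1 hc2 hx'
        simp only [Complex.add_re, Complex.mul_re, Complex.mul_im, Complex.add_im,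
          Complex.conj_re, Complex.conj_im, Complex.ofReal_re, Complex.ofReal_im,
          Complex.zero_re, Complex.sub_re, Complex.sub_im, Complex.one_re, Complex.one_im]
        nlinarith [key]
      · simp [Complex.add_im, Complex.mul_im, Complex.conj_re, Complex.conj_im]
        ring
  · simp [Matrix.trace, rhoFam, Fin.sum_univ_two, Matrix.diag]
  · intro i j
    rw [hrhs]
    fin_cases i <;> fin_cases j
    · simpa [rhoFam] using hasDerivWithinAt_ofReal_comp (hderiv θ hθ)
    · simpa [rhoFam] using hasDerivWithinAt_ofReal_comp ((hr.const_mul ε))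
    · simpa [rhoFam] using hasDerivWithinAt_ofReal_comp ((hr.const_mul ε))
    · have : HasDerivWithinAt (fun t => 1 - p t) (-(p' θ)) (Set.Icc a b) θ :=
        (hderiv θ hθ).const_sub 1
      simpa [rhoFam] using hasDerivWithinAt_ofReal_comp this
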